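/- Let a, b ∈ ℂ^N, let A, B ∈ ℂ^{M×M}, and set C_a = diag(a) ⊗ I_M and C_b = diag(b) ⊗ I_M ∈ ℂ^{NM×NM}. Then tr( C_a (1_{N×N} ⊗ A) C_a^H · C_b (1_{N×N} ⊗ B) C_b^H ) = |a^H b|² · tr(A B), where 1_{N×N} is the N×N all-ones matrix. -/

import Mathlib

open Matrix Kronecker

private lemma kron_conjT {m n p q : Type*} (A : Matrix m n ℂ) (B : Matrix p q ℂ) :
    (A ⊗ₖ B)ᴴ = Aᴴ ⊗ₖ Bᴴ := by
  ext ⟨i, j⟩ ⟨k, l⟩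
  simp [Matrix.conjTranspose_apply, Matrix.kroneckerMap_apply, mul_comm]

private lemma diag_ones_diag {N : ℕ} (c : Fin N → ℂ) :
    Matrix.diagonal c * (Matrix.of fun _ _ => (1 : ℂ) : Matrix (Fin N) (Fin N) ℂ) *
      (Matrix.diagonal c)ᴴ = Matrix.vecMulVec c (star c) := by
  ext i j
  simp [Matrix.mul_apply, Matrix.diagonal_apply, Matrix.vecMulVec_apply,
    Matrix.conjTranspose_apply, apply_ite star]

private lemma trace_diag_ones {N : ℕ} (a b : Fin N → ℂ) :
    (Matrix.diagonal a * (Matrix.of fun _ _ => (1 : ℂ) : Matrix (Fin N) (Fin N) ℂ) *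
      (Matrix.diagonal a)ᴴ *
      (Matrix.diagonal b * (Matrix.of fun _ _ => (1 : ℂ) : Matrix (Fin N) (Fin N) ℂ) *
      (Matrix.diagonal b)ᴴ)).trace
    = (↑(‖star a ⬝ᵥ b‖ ^ 2) : ℂ) := by
  have hnorm : ((‖star a ⬝ᵥ b‖ ^ 2 : ℝ) : ℂ)
      = (star a ⬝ᵥ b) * star (star a ⬝ᵥ b) := by
    rw [RCLike.star_def, Complex.mul_conj, Complex.normSq_eq_norm_sq]
  rw [hnorm, diag_ones_diag, diag_ones_diag]
  simp only [Matrix.trace, Matrix.diag, Matrix.mul_apply, Matrix.vecMulVec_apply,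
    dotProduct, Pi.star_apply, star_sum, star_mul', star_star]
  rw [Finset.sum_comm, Finset.sum_mul_sum]
  congr 1; ext k; congr 1; ext i
  ring

/-- **Key trace identity for MOMA code matrices under flat correlation.**
For `a, b ∈ ℂ^N`, `A, B ∈ ℂ^{M×M}`, with code matrices `C_a = diag(a) ⊗ I_M` and
`C_b = diag(b) ⊗ I_M`, and `1_{N×N}` the all-ones matrix,
`tr( C_a (1_{N×N} ⊗ A) C_aᴴ · C_b (1_{N×N} ⊗ B) C_bᴴ ) = |aᴴ b|² · tr(A B)`. -/
theorem trace_code_kronecker_product {N M : ℕ}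
    (a b : Fin N → ℂ) (A B : Matrix (Fin M) (Fin M) ℂ) :
    (((Matrix.diagonal a ⊗ₖ (1 : Matrix (Fin M) (Fin M) ℂ)) *
        ((Matrix.of fun _ _ => (1 : ℂ) : Matrix (Fin N) (Fin N) ℂ) ⊗ₖ A) *
        (Matrix.diagonal a ⊗ₖ (1 : Matrix (Fin M) (Fin M) ℂ))ᴴ) *
      ((Matrix.diagonal b ⊗ₖ (1 : Matrix (Fin M) (Fin M) ℂ)) *
        ((Matrix.of fun _ _ => (1 : ℂ) : Matrix (Fin N) (Fin N) ℂ) ⊗ₖ B) *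
        (Matrix.diagonal b ⊗ₖ (1 : Matrix (Fin M) (Fin M) ℂ))ᴴ)).trace
      = (↑(‖star a ⬝ᵥ b‖ ^ 2) : ℂ) * (A * B).trace := by
  rw [kron_conjT, kron_conjT, Matrix.conjTranspose_one,
    ← Matrix.mul_kronecker_mul, ← Matrix.mul_kronecker_mul,
    ← Matrix.mul_kronecker_mul, ← Matrix.mul_kronecker_mul,
    ← Matrix.mul_kronecker_mul, Matrix.trace_kronecker]
  simp only [Matrix.one_mul, Matrix.mul_one]
  rw [trace_diag_ones]
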